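/- Let Q and Q' be compact Hausdorff spaces such that Q' is the image of Q under a continuous surjection, and let X be a topological space. If X × Q is a normal Hausdorff space, then X × Q' is a normal Hausdorff space. -/

import Mathlib

open Set TopologicalSpace

/-- A map `G` on ordered pairs of sets is intersection preserving on a domain `D` if
`G(A,B) ∩ G(A',B') = G(A ∩ A', B ∩ B')` for all pairs in `D`. -/
def IntersectionPreserving {T X : Type*} (D : Set (Set T × Set T))
    (G : Set T × Set T → Set X) : Prop :=
  ∀ p ∈ D, ∀ q ∈ D, G p ∩ G q = G (p.1 ∩ q.1, p.2 ∩ q.2)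

/-- `S_𝓑`: the pairs `(B, D)` of members of the base with disjoint closures. -/
def SB {T : Type*} [TopologicalSpace T] (𝓑 : Set (Set T)) : Set (Set T × Set T) :=
  {p | p.1 ∈ 𝓑 ∧ p.2 ∈ 𝓑 ∧ closure p.1 ∩ closure p.2 = ∅}

/-- `𝓑` is a base for the topology of `T` closed under (binary) unions and intersections. -/
def IsGoodBase {T : Type*} [TopologicalSpace T] (𝓑 : Set (Set T)) : Prop :=
  IsTopologicalBasis 𝓑 ∧ (∀ b ∈ 𝓑, ∀ d ∈ 𝓑, b ∪ d ∈ 𝓑) ∧ (∀ b ∈ 𝓑, ∀ d ∈ 𝓑, b ∩ d ∈ 𝓑)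

/-- `G : S_𝓑 → 𝒫(X)` is the associated map of a `𝓑`-covering of `X`: it is intersection
preserving, its values on `S_𝓑` are open, and they cover `X`. -/
def IsBCoveringMap {T X : Type*} [TopologicalSpace T] [TopologicalSpace X]
    (𝓑 : Set (Set T)) (G : Set T × Set T → Set X) : Prop :=
  IntersectionPreserving (SB 𝓑) G ∧ (∀ p ∈ SB 𝓑, IsOpen (G p)) ∧
    (⋃ p ∈ SB 𝓑, G p) = Set.univ

/-- A family `𝓖` of subsets of `X` is a `𝓑`-covering of `X` if it is the (surjective) image of
`S_𝓑` under some intersection preserving map whose values are open and cover `X`. -/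
def IsBCovering {T X : Type*} [TopologicalSpace T] [TopologicalSpace X]
    (𝓑 : Set (Set T)) (𝓖 : Set (Set X)) : Prop :=
  ∃ G : Set T × Set T → Set X, IsBCoveringMap 𝓑 G ∧ G '' (SB 𝓑) = 𝓖

/-- `G : 𝓑 × 𝓑 → 𝒫(X)` is the associated map of a pre-`𝓑`-covering of `X`: it is intersection
preserving on `𝓑 × 𝓑`, all its values on `𝓑 × 𝓑` are open, and its restriction to `S_𝓑`
is (the associated map of) a `𝓑`-covering, i.e. the values over `S_𝓑` already cover `X`. -/
def IsPreBCoveringMap {T X : Type*} [TopologicalSpace T] [TopologicalSpace X]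
    (𝓑 : Set (Set T)) (G : Set T × Set T → Set X) : Prop :=
  IntersectionPreserving (𝓑 ×ˢ 𝓑) G ∧ (∀ p ∈ 𝓑 ×ˢ 𝓑, IsOpen (G p)) ∧
    (⋃ p ∈ SB 𝓑, G p) = Set.univ

/-- A normal space: both T₄ (disjoint closed sets are separated) and Hausdorff. -/
def IsNormalHausdorff (X : Type*) [TopologicalSpace X] : Prop :=
  NormalSpace X ∧ T2Space X

/-- A perfect map: a continuous closed surjection all of whose fibers are compact. -/
def IsPerfectMap {X Y : Type*} [TopologicalSpace X] [TopologicalSpace Y] (p : X → Y) : Prop :=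
  Continuous p ∧ IsClosedMap p ∧ Function.Surjective p ∧ ∀ y : Y, IsCompact (p ⁻¹' {y})

/-- `𝓥` is a locally finite open refinement of `𝓖`: an open cover, locally finite, each of
whose members is contained in some member of `𝓖`. -/
def IsLocallyFiniteOpenRefinement {X : Type*} [TopologicalSpace X]
    (𝓖 𝓥 : Set (Set X)) : Prop :=
  (∀ v ∈ 𝓥, IsOpen v) ∧ ⋃₀ 𝓥 = Set.univ ∧
    (∀ x : X, ∃ U : Set X, IsOpen U ∧ x ∈ U ∧ {v ∈ 𝓥 | (v ∩ U).Nonempty}.Finite) ∧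
    ∀ v ∈ 𝓥, ∃ u ∈ 𝓖, v ⊆ u


theorem normal_of_closed_surj {X Y : Type*} [TopologicalSpace X] [TopologicalSpace Y]
    [NormalSpace X] {g : X → Y} (hc : Continuous g) (hcl : IsClosedMap g)
    (hs : Function.Surjective g) : NormalSpace Y := by
  constructor
  intro s t hsC htC hst
  obtain ⟨U, V, hU, hV, hsU, htV, hUV⟩ :=
    normal_separation (hsC.preimage hc) (htC.preimage hc) (hst.preimage g)
  refine ⟨(g '' Uᶜ)ᶜ, (g '' Vᶜ)ᶜ, (hcl _ hU.isClosed_compl).isOpen_compl,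
    (hcl _ hV.isClosed_compl).isOpen_compl, ?_, ?_, ?_⟩
  · intro y hy hy'
    obtain ⟨x, hx, rfl⟩ := hy'
    exact hx (hsU hy)
  · intro y hy hy'
    obtain ⟨x, hx, rfl⟩ := hy'
    exact hx (htV hy)
  · rw [Set.disjoint_left]
    rintro y hy1 hy2
    obtain ⟨x, rfl⟩ := hs y
    by_cases hxU : x ∈ U
    · exact hy2 ⟨x, Set.disjoint_left.mp hUV hxU, rfl⟩
    · exact hy1 ⟨x, hxU, rfl⟩

/-- (Morita) If `Q, Q'` are compact Hausdorff, `Q'` is a continuous image of `Q`, and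
`X × Q` is normal Hausdorff, then `X × Q'` is normal Hausdorff. -/
theorem stmt_7 {Q Q' X : Type*} [TopologicalSpace Q] [TopologicalSpace Q'] [TopologicalSpace X]
    [CompactSpace Q] [T2Space Q] [CompactSpace Q'] [T2Space Q']
    (f : Q → Q') (hfc : Continuous f) (hfs : Function.Surjective f)
    (h : IsNormalHausdorff (X × Q)) : IsNormalHausdorff (X × Q') := by
  obtain ⟨hN, hT2⟩ := h
  by_cases hne : Nonempty Q'
  · obtain ⟨q'⟩ := hne
    obtain ⟨q, rfl⟩ := hfs q'
    have hXT2 : T2Space X :=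
      (((Homeomorph.prodComm Q X).isEmbedding.comp (isEmbedding_prodMkRight q))).t2Space
    have hprop : IsProperMap (Prod.map (id : X → X) f) :=
      isProperMap_id.prodMap hfc.isProperMap
    have hsurj : Function.Surjective (Prod.map (id : X → X) f) :=
      Function.Surjective.prodMap Function.surjective_id hfs
    exact ⟨normal_of_closed_surj (continuous_id.prodMap hfc) hprop.isClosedMap hsurj,
      inferInstance⟩
  · have : IsEmpty Q' := not_nonempty_iff.mp hne
    have : IsEmpty (X × Q') := Prod.isEmpty_right
    exact ⟨inferInstance, inferInstance⟩
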